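/- Assume k₁,k₂,k₃ ∈ ℤ, l₁,l₂,l₃ ∈ ℤ, j₁,j₂,j₃ ∈ ℤ₊, and f_i : ℝ³ → [0,∞) are L² functions supported in D_{k_i,l_i,j_i} for i = 1,2,3. Then ∫_{ℝ³} (f₁∗f₂)·f₃ ≲ 2^{[min(k₁,k₂,k₃)+min(l₁,l₂,l₃)+min(j₁,j₂,j₃)]/2} · ‖f₁‖_{L²}‖f₂‖_{L²}‖f₃‖_{L²}, with the implicit constant independent of all parameters. -/

import Mathlib

open MeasureTheory

/-- The KP-I dispersion relation `ω(ξ,μ) = ξ³ + μ²/ξ`. -/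
noncomputable def omega (ξ μ : ℝ) : ℝ := ξ ^ 3 + μ ^ 2 / ξ

/-- The dyadic frequency annulus `Ĩ_k = {ξ : 2^(k-1) ≤ |ξ| ≤ 2^(k+1)}`. -/
def Itilde (k : ℤ) : Set ℝ := {ξ : ℝ | (2 : ℝ) ^ (k - 1) ≤ |ξ| ∧ |ξ| ≤ (2 : ℝ) ^ (k + 1)}

/-- The region `D_{k,∞,j} = {(ξ,μ,τ) : ξ ∈ Ĩ_k, |τ - ω(ξ,μ)| ≤ 2^j}`. -/
noncomputable def Dset (k j : ℤ) : Set (ℝ × ℝ × ℝ) :=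
  {p : ℝ × ℝ × ℝ | p.1 ∈ Itilde k ∧ |p.2.2 - omega p.1 p.2.1| ≤ (2 : ℝ) ^ j}

/-- Convolution on `ℝ³`. -/
noncomputable def conv (f g : ℝ × ℝ × ℝ → ℝ) (x : ℝ × ℝ × ℝ) : ℝ :=
  ∫ y, f y * g (x - y)

/-- The weight `p(ξ,μ) = 1 + |μ|/(|ξ| + |ξ|²)`. -/
noncomputable def pw (ξ μ : ℝ) : ℝ := 1 + |μ| / (|ξ| + |ξ| ^ 2)

/-- The region `D_{k,l,j} = {(ξ,μ,τ) : ξ ∈ Ĩ_k, |μ| ≤ 2^l, |τ - ω(ξ,μ)| ≤ 2^j}`. -/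
noncomputable def DsetL (k l j : ℤ) : Set (ℝ × ℝ × ℝ) :=
  {p : ℝ × ℝ × ℝ | p.1 ∈ Itilde k ∧ |p.2.1| ≤ (2 : ℝ) ^ l ∧
    |p.2.2 - omega p.1 p.2.1| ≤ (2 : ℝ) ^ j}

open scoped ENNReal

noncomputable section StmtAux

instance vol2_haar : (volume : Measure (ℝ×ℝ)).IsAddHaarMeasure := by
  rw [Measure.volume_eq_prod]; infer_instance
instance vol3_haar : (volume : Measure (ℝ×ℝ×ℝ)).IsAddHaarMeasure := by
  rw [Measure.volume_eq_prod]; infer_instance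
instance vol2_left : (volume : Measure (ℝ×ℝ)).IsAddLeftInvariant := by
  rw [Measure.volume_eq_prod]; infer_instance
instance vol3_left : (volume : Measure (ℝ×ℝ×ℝ)).IsAddLeftInvariant := by
  rw [Measure.volume_eq_prod]; infer_instance

lemma conj22 : Real.HolderConjugate 2 2 := Real.HolderConjugate.two_two

/-- generic L² quantity -/
def eL2 {α : Type*} [MeasurableSpace α] (μ : Measure α) (g : α → ℝ≥0∞) : ℝ≥0∞ :=
  (∫⁻ x, g x ^ (2:ℝ) ∂μ) ^ (1/2 : ℝ)

lemma rpow_half_sq (x : ℝ≥0∞) : (x ^ (1/2:ℝ)) ^ (2:ℝ) = x := by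
  rw [← ENNReal.rpow_mul]; norm_num

lemma holder2 {α : Type*} [MeasurableSpace α] (μ : Measure α) {f g : α → ℝ≥0∞}
    (hf : Measurable f) (hg : Measurable g) :
    ∫⁻ a, f a * g a ∂μ ≤ eL2 μ f * eL2 μ g := by
  simpa [eL2] using
    ENNReal.lintegral_mul_le_Lp_mul_Lq μ conj22 hf.aemeasurable hg.aemeasurable

lemma CS_support {α : Type*} [MeasurableSpace α] (μ : Measure α) {f : α → ℝ≥0∞}
    (hf : Measurable f) {S : Set α} (hS : MeasurableSet S)
    (hsupp : ∀ a, f a ≠ 0 → a ∈ S) {r : ℝ≥0∞} (hr : μ S ≤ r) :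
    ∫⁻ a, f a ∂μ ≤ r ^ (1/2:ℝ) * eL2 μ f := by
  have h1 : ∀ a, f a = S.indicator (fun _ => (1:ℝ≥0∞)) a * f a := by
    intro a
    by_cases h : f a = 0
    · simp [h]
    · simp [Set.indicator_of_mem (hsupp a h)]
  calc ∫⁻ a, f a ∂μ = ∫⁻ a, S.indicator (fun _ => (1:ℝ≥0∞)) a * f a ∂μ :=
        lintegral_congr h1
    _ ≤ eL2 μ (S.indicator fun _ => 1) * eL2 μ f :=
        holder2 μ (measurable_const.indicator hS) hf
    _ ≤ r ^ (1/2:ℝ) * eL2 μ f := by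
        gcongr
        have : ∀ a, (S.indicator (fun _ => (1:ℝ≥0∞)) a) ^ (2:ℝ)
            = S.indicator (fun _ => (1:ℝ≥0∞)) a := by
          intro a
          by_cases h : a ∈ S <;> simp [h, ENNReal.zero_rpow_of_pos]
        rw [eL2]
        calc (∫⁻ a, (S.indicator (fun _ => (1:ℝ≥0∞)) a) ^ (2:ℝ) ∂μ) ^ (1/2:ℝ)
            = (μ S) ^ (1/2:ℝ) := by
              rw [lintegral_congr this]
              congr 1
              exact lintegral_indicator_one hS
          _ ≤ r ^ (1/2:ℝ) := by gcongr

/-- The 1D trilinear convolution form. -/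
def Tform (a b c : ℝ → ℝ≥0∞) : ℝ≥0∞ := ∫⁻ s, ∫⁻ t, a s * b t * c (s + t)

lemma lintegral_comp_neg (f : ℝ → ℝ≥0∞) (hf : Measurable f) :
    ∫⁻ s, f (-s) = ∫⁻ s, f s :=
  (Measure.measurePreserving_neg (volume : Measure ℝ)).lintegral_comp hf

section Tri

variable {a b c : ℝ → ℝ≥0∞} (ha : Measurable a) (hb : Measurable b) (hc : Measurable c)

include ha hb hc

lemma tri_swap : Tform a b c = Tform b a c := by
  rw [Tform, Tform, lintegral_lintegral_swap]
  · refine lintegral_congr fun t => lintegral_congr fun s => ?_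
    rw [add_comm]; ring
  · exact Measurable.aemeasurable (show Measurable fun p : ℝ × ℝ =>
      a p.1 * b p.2 * c (p.1 + p.2) by fun_prop)

lemma tri_a {r : ℝ≥0∞} (hr : volume {s | a s ≠ 0} ≤ r) :
    Tform a b c ≤ r ^ (1/2:ℝ) * (eL2 volume a * eL2 volume b * eL2 volume c) := by
  have hSa : MeasurableSet {s | a s ≠ 0} := (ha (measurableSet_singleton 0)).compl
  have hswap : Tform a b c = ∫⁻ t, ∫⁻ s, a s * b t * c (s + t) := by
    rw [Tform, lintegral_lintegral_swap]
    exact Measurable.aemeasurable (show Measurable fun p : ℝ × ℝ =>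
      a p.1 * b p.2 * c (p.1 + p.2) by fun_prop)
  set W : ℝ → ℝ≥0∞ := fun t => (∫⁻ s, (a s * c (s + t)) ^ (2:ℝ)) ^ (1/2:ℝ) with hW
  have hWmeas : Measurable W := by
    apply Measurable.pow_const
    apply Measurable.lintegral_prod_right (f := fun t s => (a s * c (s + t)) ^ (2:ℝ))
    exact show Measurable fun p : ℝ × ℝ => (a p.2 * c (p.2 + p.1)) ^ (2:ℝ) by fun_prop
  have hinner : ∀ t, ∫⁻ s, a s * b t * c (s + t) ≤ b t * (r ^ (1/2:ℝ) * W t) := by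
    intro t
    have hm : Measurable fun s => a s * c (s + t) := by fun_prop
    have h1 : ∀ s, a s * b t * c (s + t) = b t * (a s * c (s + t)) := fun s => by ring
    rw [lintegral_congr h1, lintegral_const_mul _ hm]
    gcongr
    exact CS_support volume hm hSa
      (fun s h => by simp only [Set.mem_setOf_eq]; intro h0; rw [h0] at h; simp at h) hr
  calc Tform a b c ≤ ∫⁻ t, b t * (r ^ (1/2:ℝ) * W t) := by
        rw [hswap]; exact lintegral_mono hinner
    _ = r ^ (1/2:ℝ) * ∫⁻ t, b t * W t := by
        rw [← lintegral_const_mul (f := fun t => b t * W t) _ (hb.mul hWmeas)]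
        exact lintegral_congr fun t => by ring
    _ ≤ r ^ (1/2:ℝ) * (eL2 volume b * eL2 volume W) := by gcongr; exact holder2 volume hb hWmeas
    _ = r ^ (1/2:ℝ) * (eL2 volume a * eL2 volume b * eL2 volume c) := by
        have hWsq : ∀ t, W t ^ (2:ℝ) = ∫⁻ s, a s ^ (2:ℝ) * c (s + t) ^ (2:ℝ) := by
          intro t
          rw [hW, rpow_half_sq]
          exact lintegral_congr fun s => ENNReal.mul_rpow_of_nonneg _ _ (by norm_num)
        have hkey : eL2 volume W = eL2 volume a * eL2 volume c := by
          rw [eL2, lintegral_congr hWsq, lintegral_lintegral_swap]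
          · have h3 : ∀ s, ∫⁻ t, a s ^ (2:ℝ) * c (s + t) ^ (2:ℝ)
                = a s ^ (2:ℝ) * ∫⁻ u, c u ^ (2:ℝ) := by
              intro s
              have hm : Measurable fun t => c (s + t) ^ (2:ℝ) := by fun_prop
              rw [lintegral_const_mul _ hm]
              congr 1
              exact lintegral_add_left_eq_self (fun u => c u ^ (2:ℝ)) s
            have hm2 : Measurable fun s => a s ^ (2:ℝ) := by fun_prop
            rw [lintegral_congr h3, lintegral_mul_const _ hm2, eL2, eL2,
              ENNReal.mul_rpow_of_nonneg _ _ (by norm_num)]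
          · exact Measurable.aemeasurable (show Measurable fun p : ℝ × ℝ =>
              a p.2 ^ (2:ℝ) * c (p.2 + p.1) ^ (2:ℝ) by fun_prop)
        rw [hkey]; ring

lemma tri_b {r : ℝ≥0∞} (hr : volume {s | b s ≠ 0} ≤ r) :
    Tform a b c ≤ r ^ (1/2:ℝ) * (eL2 volume a * eL2 volume b * eL2 volume c) := by
  rw [tri_swap ha hb hc]
  calc Tform b a c ≤ r ^ (1/2:ℝ) * (eL2 volume b * eL2 volume a * eL2 volume c) :=
        tri_a hb ha hc hr
    _ = r ^ (1/2:ℝ) * (eL2 volume a * eL2 volume b * eL2 volume c) := by ring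

lemma tri_c {r : ℝ≥0∞} (hr : volume {s | c s ≠ 0} ≤ r) :
    Tform a b c ≤ r ^ (1/2:ℝ) * (eL2 volume a * eL2 volume b * eL2 volume c) := by
  have hSc : MeasurableSet {s | c s ≠ 0} := (hc (measurableSet_singleton 0)).compl
  set V : ℝ → ℝ≥0∞ := fun s => (∫⁻ u, (b (u - s) * c u) ^ (2:ℝ)) ^ (1/2:ℝ) with hV
  have hVmeas : Measurable V := by
    apply Measurable.pow_const
    apply Measurable.lintegral_prod_right (f := fun s u => (b (u - s) * c u) ^ (2:ℝ))
    exact show Measurable fun p : ℝ × ℝ => (b (p.2 - p.1) * c p.2) ^ (2:ℝ) by fun_prop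
  have hinner : ∀ s, ∫⁻ t, a s * b t * c (s + t) ≤ a s * (r ^ (1/2:ℝ) * V s) := by
    intro s
    have hm : Measurable fun t => b t * c (s + t) := by fun_prop
    have h1 : ∀ t, a s * b t * c (s + t) = a s * (b t * c (s + t)) := fun t => by ring
    rw [lintegral_congr h1, lintegral_const_mul _ hm]
    gcongr
    have hsub : ∫⁻ t, b t * c (s + t) = ∫⁻ u, b (u - s) * c u := by
      rw [← lintegral_add_right_eq_self (fun u => b (u - s) * c u) s]
      exact lintegral_congr fun t => by rw [add_sub_cancel_right, add_comm]
    rw [hsub]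
    have hm2 : Measurable fun u => b (u - s) * c u := by fun_prop
    exact CS_support volume hm2 hSc
      (fun u h => by simp only [Set.mem_setOf_eq]; intro h0; rw [h0] at h; simp at h) hr
  calc Tform a b c ≤ ∫⁻ s, a s * (r ^ (1/2:ℝ) * V s) := lintegral_mono hinner
    _ = r ^ (1/2:ℝ) * ∫⁻ s, a s * V s := by
        rw [← lintegral_const_mul (f := fun s => a s * V s) _ (ha.mul hVmeas)]
        exact lintegral_congr fun s => by ring
    _ ≤ r ^ (1/2:ℝ) * (eL2 volume a * eL2 volume V) := by gcongr; exact holder2 volume ha hVmeas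
    _ = r ^ (1/2:ℝ) * (eL2 volume a * eL2 volume b * eL2 volume c) := by
        have hVsq : ∀ s, V s ^ (2:ℝ) = ∫⁻ u, b (u - s) ^ (2:ℝ) * c u ^ (2:ℝ) := by
          intro s
          rw [hV, rpow_half_sq]
          exact lintegral_congr fun u => ENNReal.mul_rpow_of_nonneg _ _ (by norm_num)
        have hkey : eL2 volume V = eL2 volume b * eL2 volume c := by
          rw [eL2, lintegral_congr hVsq, lintegral_lintegral_swap]
          · have h3 : ∀ u, ∫⁻ s, b (u - s) ^ (2:ℝ) * c u ^ (2:ℝ)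
                = (∫⁻ t, b t ^ (2:ℝ)) * c u ^ (2:ℝ) := by
              intro u
              have hm : Measurable fun s => b (u - s) ^ (2:ℝ) := by fun_prop
              rw [lintegral_mul_const _ hm]
              congr 1
              have h2 : ∀ s : ℝ, b (u - s) ^ (2:ℝ) = (fun z => b (u + z) ^ (2:ℝ)) (-s) :=
                fun s => by simp [sub_eq_add_neg]
              calc ∫⁻ s, b (u - s) ^ (2:ℝ) = ∫⁻ s, (fun z => b (u + z) ^ (2:ℝ)) (-s) :=
                    lintegral_congr h2
                _ = ∫⁻ s, b (u + s) ^ (2:ℝ) :=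
                    lintegral_comp_neg (fun z => b (u + z) ^ (2:ℝ)) (by fun_prop)
                _ = ∫⁻ t, b t ^ (2:ℝ) := lintegral_add_left_eq_self (fun t => b t ^ (2:ℝ)) u
            have hm2 : Measurable fun u => c u ^ (2:ℝ) := by fun_prop
            rw [lintegral_congr h3, lintegral_const_mul _ hm2]
            rw [eL2, eL2, ← ENNReal.mul_rpow_of_nonneg _ _ (show (0:ℝ) ≤ 1/2 by norm_num)]
          · exact Measurable.aemeasurable (show Measurable fun p : ℝ × ℝ =>
              b (p.2 - p.1) ^ (2:ℝ) * c p.2 ^ (2:ℝ) by fun_prop)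
        rw [hkey]; ring

lemma tri_min {ra rb rc : ℝ≥0∞} (hra : volume {s | a s ≠ 0} ≤ ra)
    (hrb : volume {s | b s ≠ 0} ≤ rb) (hrc : volume {s | c s ≠ 0} ≤ rc) :
    Tform a b c ≤ (min ra (min rb rc)) ^ (1/2:ℝ) *
      (eL2 volume a * eL2 volume b * eL2 volume c) := by
  rcases min_cases ra (min rb rc) with ⟨h1, _⟩ | ⟨h1, _⟩
  · rw [h1]; exact tri_a ha hb hc hra
  · rcases min_cases rb rc with ⟨h2, _⟩ | ⟨h2, _⟩ <;> rw [h1, h2]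
    · exact tri_b ha hb hc hrb
    · exact tri_c ha hb hc hrc

end Tri

lemma lint2 (F : ℝ × ℝ → ℝ≥0∞) (hF : Measurable F) :
    ∫⁻ w, F w = ∫⁻ x, ∫⁻ y, F (x, y) := by
  rw [Measure.volume_eq_prod]; exact lintegral_prod F hF.aemeasurable

lemma lint3 (F : ℝ × ℝ × ℝ → ℝ≥0∞) (hF : Measurable F) :
    ∫⁻ p, F p = ∫⁻ x, ∫⁻ w : ℝ × ℝ, F (x, w) := by
  rw [Measure.volume_eq_prod]; exact lintegral_prod F hF.aemeasurable

section TwoD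

variable {h₁ h₂ h₃ : ℝ × ℝ → ℝ≥0∞}

lemma twoD (hm₁ : Measurable h₁) (hm₂ : Measurable h₂) (hm₃ : Measurable h₃)
    {S₁ S₂ S₃ : Set ℝ} (hS₁ : MeasurableSet S₁) (hS₂ : MeasurableSet S₂)
    (hS₃ : MeasurableSet S₃)
    {rl₁ rl₂ rl₃ rj₁ rj₂ rj₃ : ℝ≥0∞}
    (hsupp₁ : ∀ w, h₁ w ≠ 0 → w.1 ∈ S₁) (hsupp₂ : ∀ w, h₂ w ≠ 0 → w.1 ∈ S₂)
    (hsupp₃ : ∀ w, h₃ w ≠ 0 → w.1 ∈ S₃)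
    (hvol₁ : volume S₁ ≤ rl₁) (hvol₂ : volume S₂ ≤ rl₂) (hvol₃ : volume S₃ ≤ rl₃)
    (hj₁ : ∀ x : ℝ, volume {y : ℝ | h₁ (x, y) ≠ 0} ≤ rj₁)
    (hj₂ : ∀ x : ℝ, volume {y : ℝ | h₂ (x, y) ≠ 0} ≤ rj₂)
    (hj₃ : ∀ x : ℝ, volume {y : ℝ | h₃ (x, y) ≠ 0} ≤ rj₃) :
    (∫⁻ w₁, ∫⁻ w₂, h₁ w₁ * h₂ w₂ * h₃ (w₁ + w₂)) ≤
      (min rj₁ (min rj₂ rj₃)) ^ (1/2:ℝ) * ((min rl₁ (min rl₂ rl₃)) ^ (1/2:ℝ) *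
        (eL2 volume h₁ * eL2 volume h₂ * eL2 volume h₃)) := by
  classical
  set Φ₁ : ℝ → ℝ≥0∞ := fun x => (∫⁻ y, h₁ (x, y) ^ (2:ℝ)) ^ (1/2:ℝ) with hΦ₁
  set Φ₂ : ℝ → ℝ≥0∞ := fun x => (∫⁻ y, h₂ (x, y) ^ (2:ℝ)) ^ (1/2:ℝ) with hΦ₂
  set Φ₃ : ℝ → ℝ≥0∞ := fun x => (∫⁻ y, h₃ (x, y) ^ (2:ℝ)) ^ (1/2:ℝ) with hΦ₃
  have hΦm₁ : Measurable Φ₁ := by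
    apply Measurable.pow_const
    exact Measurable.lintegral_prod_right (f := fun x y => h₁ (x, y) ^ (2:ℝ))
      (show Measurable fun p : ℝ × ℝ => h₁ p ^ (2:ℝ) by fun_prop)
  have hΦm₂ : Measurable Φ₂ := by
    apply Measurable.pow_const
    exact Measurable.lintegral_prod_right (f := fun x y => h₂ (x, y) ^ (2:ℝ))
      (show Measurable fun p : ℝ × ℝ => h₂ p ^ (2:ℝ) by fun_prop)
  have hΦm₃ : Measurable Φ₃ := by
    apply Measurable.pow_const
    exact Measurable.lintegral_prod_right (f := fun x y => h₃ (x, y) ^ (2:ℝ))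
      (show Measurable fun p : ℝ × ℝ => h₃ p ^ (2:ℝ) by fun_prop)
  -- expand into four iterated integrals and swap the middle two
  have hGm : Measurable fun w₁ : ℝ × ℝ => ∫⁻ w₂, h₁ w₁ * h₂ w₂ * h₃ (w₁ + w₂) := by
    apply Measurable.lintegral_prod_right'
      (f := fun q : (ℝ × ℝ) × ℝ × ℝ => h₁ q.1 * h₂ q.2 * h₃ (q.1 + q.2))
    fun_prop
  have step1 : (∫⁻ w₁, ∫⁻ w₂, h₁ w₁ * h₂ w₂ * h₃ (w₁ + w₂))
      = ∫⁻ x₁, ∫⁻ x₂, ∫⁻ y₁, ∫⁻ y₂,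
          h₁ (x₁, y₁) * h₂ (x₂, y₂) * h₃ (x₁ + x₂, y₁ + y₂) := by
    rw [lint2 _ hGm]
    refine lintegral_congr fun x₁ => ?_
    have e1 : ∀ y₁, (∫⁻ w₂, h₁ (x₁, y₁) * h₂ w₂ * h₃ ((x₁, y₁) + w₂))
        = ∫⁻ x₂, ∫⁻ y₂, h₁ (x₁, y₁) * h₂ (x₂, y₂) * h₃ (x₁ + x₂, y₁ + y₂) := by
      intro y₁
      rw [lint2 _ (by fun_prop)]
      exact lintegral_congr fun x => lintegral_congr fun y => rfl
    calc (∫⁻ y₁, ∫⁻ w₂, h₁ (x₁, y₁) * h₂ w₂ * h₃ ((x₁, y₁) + w₂))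
        = ∫⁻ y₁, ∫⁻ x₂, ∫⁻ y₂, h₁ (x₁, y₁) * h₂ (x₂, y₂) * h₃ (x₁ + x₂, y₁ + y₂) :=
          lintegral_congr e1
      _ = ∫⁻ x₂, ∫⁻ y₁, ∫⁻ y₂, h₁ (x₁, y₁) * h₂ (x₂, y₂) * h₃ (x₁ + x₂, y₁ + y₂) := by
          apply lintegral_lintegral_swap
          apply Measurable.aemeasurable
          apply Measurable.lintegral_prod_right'
            (f := fun q : (ℝ × ℝ) × ℝ =>
              h₁ (x₁, q.1.1) * h₂ (q.1.2, q.2) * h₃ (x₁ + q.1.2, q.1.1 + q.2))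
          fun_prop
  -- apply the 1D estimate in the second coordinate
  have step2 : ∀ x₁ x₂ : ℝ,
      (∫⁻ y₁, ∫⁻ y₂, h₁ (x₁, y₁) * h₂ (x₂, y₂) * h₃ (x₁ + x₂, y₁ + y₂))
        ≤ (min rj₁ (min rj₂ rj₃)) ^ (1/2:ℝ) * (Φ₁ x₁ * Φ₂ x₂ * Φ₃ (x₁ + x₂)) := by
    intro x₁ x₂
    exact tri_min (a := fun y => h₁ (x₁, y)) (b := fun y => h₂ (x₂, y))
      (c := fun y => h₃ (x₁ + x₂, y)) (by fun_prop) (by fun_prop) (by fun_prop)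
      (hj₁ x₁) (hj₂ x₂) (hj₃ (x₁ + x₂))
  -- support of the Φ's
  have hΦsupp₁ : volume {x | Φ₁ x ≠ 0} ≤ rl₁ := by
    refine le_trans (measure_mono ?_) (le_trans (le_of_eq rfl) hvol₁)
    intro x hx
    by_contra hxS
    apply hx
    have : ∀ y, h₁ (x, y) ^ (2:ℝ) = 0 := by
      intro y
      have h0 : h₁ (x, y) = 0 := by
        by_contra hne
        exact hxS (hsupp₁ (x, y) hne)
      rw [h0, ENNReal.zero_rpow_of_pos (by norm_num)]
    simp only [hΦ₁, lintegral_congr this, lintegral_zero,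
      ENNReal.zero_rpow_of_pos (show (0:ℝ) < 1/2 by norm_num)]
  have hΦsupp₂ : volume {x | Φ₂ x ≠ 0} ≤ rl₂ := by
    refine le_trans (measure_mono ?_) (le_trans (le_of_eq rfl) hvol₂)
    intro x hx
    by_contra hxS
    apply hx
    have : ∀ y, h₂ (x, y) ^ (2:ℝ) = 0 := by
      intro y
      have h0 : h₂ (x, y) = 0 := by
        by_contra hne
        exact hxS (hsupp₂ (x, y) hne)
      rw [h0, ENNReal.zero_rpow_of_pos (by norm_num)]
    simp only [hΦ₂, lintegral_congr this, lintegral_zero,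
      ENNReal.zero_rpow_of_pos (show (0:ℝ) < 1/2 by norm_num)]
  have hΦsupp₃ : volume {x | Φ₃ x ≠ 0} ≤ rl₃ := by
    refine le_trans (measure_mono ?_) (le_trans (le_of_eq rfl) hvol₃)
    intro x hx
    by_contra hxS
    apply hx
    have : ∀ y, h₃ (x, y) ^ (2:ℝ) = 0 := by
      intro y
      have h0 : h₃ (x, y) = 0 := by
        by_contra hne
        exact hxS (hsupp₃ (x, y) hne)
      rw [h0, ENNReal.zero_rpow_of_pos (by norm_num)]
    simp only [hΦ₃, lintegral_congr this, lintegral_zero,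
      ENNReal.zero_rpow_of_pos (show (0:ℝ) < 1/2 by norm_num)]
  -- norms of the Φ's
  have hΦnorm₁ : eL2 volume Φ₁ = eL2 volume h₁ := by
    rw [eL2, eL2]
    congr 1
    have : ∀ x, Φ₁ x ^ (2:ℝ) = ∫⁻ y, h₁ (x, y) ^ (2:ℝ) := fun x => by
      rw [hΦ₁]; exact rpow_half_sq _
    rw [lintegral_congr this, ← lint2 _ (show Measurable fun p : ℝ × ℝ => h₁ p ^ (2:ℝ) by fun_prop)]
  have hΦnorm₂ : eL2 volume Φ₂ = eL2 volume h₂ := by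
    rw [eL2, eL2]
    congr 1
    have : ∀ x, Φ₂ x ^ (2:ℝ) = ∫⁻ y, h₂ (x, y) ^ (2:ℝ) := fun x => by
      rw [hΦ₂]; exact rpow_half_sq _
    rw [lintegral_congr this, ← lint2 _ (show Measurable fun p : ℝ × ℝ => h₂ p ^ (2:ℝ) by fun_prop)]
  have hΦnorm₃ : eL2 volume Φ₃ = eL2 volume h₃ := by
    rw [eL2, eL2]
    congr 1
    have : ∀ x, Φ₃ x ^ (2:ℝ) = ∫⁻ y, h₃ (x, y) ^ (2:ℝ) := fun x => by
      rw [hΦ₃]; exact rpow_half_sq _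
    rw [lintegral_congr this, ← lint2 _ (show Measurable fun p : ℝ × ℝ => h₃ p ^ (2:ℝ) by fun_prop)]
  calc (∫⁻ w₁, ∫⁻ w₂, h₁ w₁ * h₂ w₂ * h₃ (w₁ + w₂))
      = ∫⁻ x₁, ∫⁻ x₂, ∫⁻ y₁, ∫⁻ y₂,
          h₁ (x₁, y₁) * h₂ (x₂, y₂) * h₃ (x₁ + x₂, y₁ + y₂) := step1
    _ ≤ ∫⁻ x₁, ∫⁻ x₂, (min rj₁ (min rj₂ rj₃)) ^ (1/2:ℝ) * (Φ₁ x₁ * Φ₂ x₂ * Φ₃ (x₁ + x₂)) :=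
        lintegral_mono fun x₁ => lintegral_mono fun x₂ => step2 x₁ x₂
    _ = (min rj₁ (min rj₂ rj₃)) ^ (1/2:ℝ) * Tform Φ₁ Φ₂ Φ₃ := by
        rw [Tform, ← lintegral_const_mul _ (show Measurable fun x₁ =>
          ∫⁻ x₂, Φ₁ x₁ * Φ₂ x₂ * Φ₃ (x₁ + x₂) from
            Measurable.lintegral_prod_right (f := fun x₁ x₂ => Φ₁ x₁ * Φ₂ x₂ * Φ₃ (x₁ + x₂))
              (by fun_prop))]
        refine lintegral_congr fun x₁ => ?_
        rw [← lintegral_const_mul _ (show Measurable fun x₂ => Φ₁ x₁ * Φ₂ x₂ * Φ₃ (x₁ + x₂)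
          by fun_prop)]
    _ ≤ (min rj₁ (min rj₂ rj₃)) ^ (1/2:ℝ) * ((min rl₁ (min rl₂ rl₃)) ^ (1/2:ℝ) *
        (eL2 volume Φ₁ * eL2 volume Φ₂ * eL2 volume Φ₃)) := by
        gcongr
        exact tri_min hΦm₁ hΦm₂ hΦm₃ hΦsupp₁ hΦsupp₂ hΦsupp₃
    _ = (min rj₁ (min rj₂ rj₃)) ^ (1/2:ℝ) * ((min rl₁ (min rl₂ rl₃)) ^ (1/2:ℝ) *
        (eL2 volume h₁ * eL2 volume h₂ * eL2 volume h₃)) := by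
        rw [hΦnorm₁, hΦnorm₂, hΦnorm₃]

end TwoD

section ThreeD

variable {g₁ g₂ g₃ : ℝ × ℝ × ℝ → ℝ≥0∞}

lemma threeD (hm₁ : Measurable g₁) (hm₂ : Measurable g₂) (hm₃ : Measurable g₃)
    {K₁ K₂ K₃ S₁ S₂ S₃ : Set ℝ}
    (hK₁ : MeasurableSet K₁) (hK₂ : MeasurableSet K₂) (hK₃ : MeasurableSet K₃)
    (hS₁ : MeasurableSet S₁) (hS₂ : MeasurableSet S₂) (hS₃ : MeasurableSet S₃)
    {rk₁ rk₂ rk₃ rl₁ rl₂ rl₃ rj₁ rj₂ rj₃ : ℝ≥0∞}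
    (hk₁ : ∀ p, g₁ p ≠ 0 → p.1 ∈ K₁) (hk₂ : ∀ p, g₂ p ≠ 0 → p.1 ∈ K₂)
    (hk₃ : ∀ p, g₃ p ≠ 0 → p.1 ∈ K₃)
    (hvK₁ : volume K₁ ≤ rk₁) (hvK₂ : volume K₂ ≤ rk₂) (hvK₃ : volume K₃ ≤ rk₃)
    (hl₁ : ∀ p, g₁ p ≠ 0 → p.2.1 ∈ S₁) (hl₂ : ∀ p, g₂ p ≠ 0 → p.2.1 ∈ S₂)
    (hl₃ : ∀ p, g₃ p ≠ 0 → p.2.1 ∈ S₃)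
    (hvS₁ : volume S₁ ≤ rl₁) (hvS₂ : volume S₂ ≤ rl₂) (hvS₃ : volume S₃ ≤ rl₃)
    (hj₁ : ∀ x y : ℝ, volume {z : ℝ | g₁ (x, (y, z)) ≠ 0} ≤ rj₁)
    (hj₂ : ∀ x y : ℝ, volume {z : ℝ | g₂ (x, (y, z)) ≠ 0} ≤ rj₂)
    (hj₃ : ∀ x y : ℝ, volume {z : ℝ | g₃ (x, (y, z)) ≠ 0} ≤ rj₃) :
    (∫⁻ p, ∫⁻ q, g₁ p * g₂ q * g₃ (p + q)) ≤
      (min rj₁ (min rj₂ rj₃)) ^ (1/2:ℝ) * ((min rl₁ (min rl₂ rl₃)) ^ (1/2:ℝ) *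
        ((min rk₁ (min rk₂ rk₃)) ^ (1/2:ℝ) *
          (eL2 volume g₁ * eL2 volume g₂ * eL2 volume g₃))) := by
  classical
  set Ψ₁ : ℝ → ℝ≥0∞ := fun x => (∫⁻ w : ℝ × ℝ, g₁ (x, w) ^ (2:ℝ)) ^ (1/2:ℝ) with hΨ₁
  set Ψ₂ : ℝ → ℝ≥0∞ := fun x => (∫⁻ w : ℝ × ℝ, g₂ (x, w) ^ (2:ℝ)) ^ (1/2:ℝ) with hΨ₂
  set Ψ₃ : ℝ → ℝ≥0∞ := fun x => (∫⁻ w : ℝ × ℝ, g₃ (x, w) ^ (2:ℝ)) ^ (1/2:ℝ) with hΨ₃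
  have hΨm₁ : Measurable Ψ₁ := by
    apply Measurable.pow_const
    exact Measurable.lintegral_prod_right (f := fun x w => g₁ (x, w) ^ (2:ℝ))
      (show Measurable fun p : ℝ × ℝ × ℝ => g₁ p ^ (2:ℝ) by fun_prop)
  have hΨm₂ : Measurable Ψ₂ := by
    apply Measurable.pow_const
    exact Measurable.lintegral_prod_right (f := fun x w => g₂ (x, w) ^ (2:ℝ))
      (show Measurable fun p : ℝ × ℝ × ℝ => g₂ p ^ (2:ℝ) by fun_prop)
  have hΨm₃ : Measurable Ψ₃ := by
    apply Measurable.pow_const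
    exact Measurable.lintegral_prod_right (f := fun x w => g₃ (x, w) ^ (2:ℝ))
      (show Measurable fun p : ℝ × ℝ × ℝ => g₃ p ^ (2:ℝ) by fun_prop)
  have hGm : Measurable fun p : ℝ × ℝ × ℝ => ∫⁻ q, g₁ p * g₂ q * g₃ (p + q) := by
    apply Measurable.lintegral_prod_right'
      (f := fun q : (ℝ × ℝ × ℝ) × ℝ × ℝ × ℝ => g₁ q.1 * g₂ q.2 * g₃ (q.1 + q.2))
    fun_prop
  have step1 : (∫⁻ p, ∫⁻ q, g₁ p * g₂ q * g₃ (p + q))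
      = ∫⁻ x₁, ∫⁻ x₂, ∫⁻ w₁ : ℝ × ℝ, ∫⁻ w₂ : ℝ × ℝ,
          g₁ (x₁, w₁) * g₂ (x₂, w₂) * g₃ (x₁ + x₂, w₁ + w₂) := by
    rw [lint3 _ hGm]
    refine lintegral_congr fun x₁ => ?_
    have e1 : ∀ w₁ : ℝ × ℝ, (∫⁻ q, g₁ (x₁, w₁) * g₂ q * g₃ ((x₁, w₁) + q))
        = ∫⁻ x₂, ∫⁻ w₂ : ℝ × ℝ, g₁ (x₁, w₁) * g₂ (x₂, w₂) * g₃ (x₁ + x₂, w₁ + w₂) := by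
      intro w₁
      rw [lint3 _ (by fun_prop)]
      exact lintegral_congr fun x₂ => lintegral_congr fun w₂ => rfl
    calc (∫⁻ w₁ : ℝ × ℝ, ∫⁻ q, g₁ (x₁, w₁) * g₂ q * g₃ ((x₁, w₁) + q))
        = ∫⁻ w₁ : ℝ × ℝ, ∫⁻ x₂, ∫⁻ w₂ : ℝ × ℝ,
            g₁ (x₁, w₁) * g₂ (x₂, w₂) * g₃ (x₁ + x₂, w₁ + w₂) := lintegral_congr e1
      _ = ∫⁻ x₂, ∫⁻ w₁ : ℝ × ℝ, ∫⁻ w₂ : ℝ × ℝ,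
            g₁ (x₁, w₁) * g₂ (x₂, w₂) * g₃ (x₁ + x₂, w₁ + w₂) := by
          apply lintegral_lintegral_swap
          apply Measurable.aemeasurable
          apply Measurable.lintegral_prod_right'
            (f := fun q : ((ℝ × ℝ) × ℝ) × ℝ × ℝ =>
              g₁ (x₁, q.1.1) * g₂ (q.1.2, q.2) * g₃ (x₁ + q.1.2, q.1.1 + q.2))
          fun_prop
  have step2 : ∀ x₁ x₂ : ℝ,
      (∫⁻ w₁ : ℝ × ℝ, ∫⁻ w₂ : ℝ × ℝ, g₁ (x₁, w₁) * g₂ (x₂, w₂) * g₃ (x₁ + x₂, w₁ + w₂))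
        ≤ (min rj₁ (min rj₂ rj₃)) ^ (1/2:ℝ) * ((min rl₁ (min rl₂ rl₃)) ^ (1/2:ℝ) *
            (Ψ₁ x₁ * Ψ₂ x₂ * Ψ₃ (x₁ + x₂))) := by
    intro x₁ x₂
    exact twoD (h₁ := fun w => g₁ (x₁, w)) (h₂ := fun w => g₂ (x₂, w))
      (h₃ := fun w => g₃ (x₁ + x₂, w)) (by fun_prop) (by fun_prop) (by fun_prop)
      hS₁ hS₂ hS₃
      (fun w h => hl₁ (x₁, w) h) (fun w h => hl₂ (x₂, w) h) (fun w h => hl₃ (x₁ + x₂, w) h)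
      hvS₁ hvS₂ hvS₃
      (fun y => hj₁ x₁ y) (fun y => hj₂ x₂ y) (fun y => hj₃ (x₁ + x₂) y)
  have hΨsupp₁ : volume {x | Ψ₁ x ≠ 0} ≤ rk₁ := by
    refine le_trans (measure_mono ?_) hvK₁
    intro x hx
    by_contra hxS
    apply hx
    have : ∀ w : ℝ × ℝ, g₁ (x, w) ^ (2:ℝ) = 0 := by
      intro w
      have h0 : g₁ (x, w) = 0 := by
        by_contra hne
        exact hxS (hk₁ (x, w) hne)
      rw [h0, ENNReal.zero_rpow_of_pos (by norm_num)]
    simp only [hΨ₁, lintegral_congr this, lintegral_zero,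
      ENNReal.zero_rpow_of_pos (show (0:ℝ) < 1/2 by norm_num)]
  have hΨsupp₂ : volume {x | Ψ₂ x ≠ 0} ≤ rk₂ := by
    refine le_trans (measure_mono ?_) hvK₂
    intro x hx
    by_contra hxS
    apply hx
    have : ∀ w : ℝ × ℝ, g₂ (x, w) ^ (2:ℝ) = 0 := by
      intro w
      have h0 : g₂ (x, w) = 0 := by
        by_contra hne
        exact hxS (hk₂ (x, w) hne)
      rw [h0, ENNReal.zero_rpow_of_pos (by norm_num)]
    simp only [hΨ₂, lintegral_congr this, lintegral_zero,
      ENNReal.zero_rpow_of_pos (show (0:ℝ) < 1/2 by norm_num)]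
  have hΨsupp₃ : volume {x | Ψ₃ x ≠ 0} ≤ rk₃ := by
    refine le_trans (measure_mono ?_) hvK₃
    intro x hx
    by_contra hxS
    apply hx
    have : ∀ w : ℝ × ℝ, g₃ (x, w) ^ (2:ℝ) = 0 := by
      intro w
      have h0 : g₃ (x, w) = 0 := by
        by_contra hne
        exact hxS (hk₃ (x, w) hne)
      rw [h0, ENNReal.zero_rpow_of_pos (by norm_num)]
    simp only [hΨ₃, lintegral_congr this, lintegral_zero,
      ENNReal.zero_rpow_of_pos (show (0:ℝ) < 1/2 by norm_num)]
  have hΨnorm₁ : eL2 volume Ψ₁ = eL2 volume g₁ := by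
    rw [eL2, eL2]
    congr 1
    have : ∀ x, Ψ₁ x ^ (2:ℝ) = ∫⁻ w : ℝ × ℝ, g₁ (x, w) ^ (2:ℝ) := fun x => by
      rw [hΨ₁]; exact rpow_half_sq _
    rw [lintegral_congr this,
      ← lint3 _ (show Measurable fun p : ℝ × ℝ × ℝ => g₁ p ^ (2:ℝ) by fun_prop)]
  have hΨnorm₂ : eL2 volume Ψ₂ = eL2 volume g₂ := by
    rw [eL2, eL2]
    congr 1
    have : ∀ x, Ψ₂ x ^ (2:ℝ) = ∫⁻ w : ℝ × ℝ, g₂ (x, w) ^ (2:ℝ) := fun x => by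
      rw [hΨ₂]; exact rpow_half_sq _
    rw [lintegral_congr this,
      ← lint3 _ (show Measurable fun p : ℝ × ℝ × ℝ => g₂ p ^ (2:ℝ) by fun_prop)]
  have hΨnorm₃ : eL2 volume Ψ₃ = eL2 volume g₃ := by
    rw [eL2, eL2]
    congr 1
    have : ∀ x, Ψ₃ x ^ (2:ℝ) = ∫⁻ w : ℝ × ℝ, g₃ (x, w) ^ (2:ℝ) := fun x => by
      rw [hΨ₃]; exact rpow_half_sq _
    rw [lintegral_congr this,
      ← lint3 _ (show Measurable fun p : ℝ × ℝ × ℝ => g₃ p ^ (2:ℝ) by fun_prop)]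
  set cJL : ℝ≥0∞ := (min rj₁ (min rj₂ rj₃)) ^ (1/2:ℝ) * (min rl₁ (min rl₂ rl₃)) ^ (1/2:ℝ)
    with hcJL
  calc (∫⁻ p, ∫⁻ q, g₁ p * g₂ q * g₃ (p + q))
      = ∫⁻ x₁, ∫⁻ x₂, ∫⁻ w₁ : ℝ × ℝ, ∫⁻ w₂ : ℝ × ℝ,
          g₁ (x₁, w₁) * g₂ (x₂, w₂) * g₃ (x₁ + x₂, w₁ + w₂) := step1
    _ ≤ ∫⁻ x₁, ∫⁻ x₂, cJL * (Ψ₁ x₁ * Ψ₂ x₂ * Ψ₃ (x₁ + x₂)) := by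
        refine lintegral_mono fun x₁ => lintegral_mono fun x₂ => ?_
        refine le_trans (step2 x₁ x₂) (le_of_eq ?_)
        rw [hcJL]; ring
    _ = cJL * Tform Ψ₁ Ψ₂ Ψ₃ := by
        rw [Tform, ← lintegral_const_mul _ (show Measurable fun x₁ =>
          ∫⁻ x₂, Ψ₁ x₁ * Ψ₂ x₂ * Ψ₃ (x₁ + x₂) from
            Measurable.lintegral_prod_right (f := fun x₁ x₂ => Ψ₁ x₁ * Ψ₂ x₂ * Ψ₃ (x₁ + x₂))
              (by fun_prop))]
        refine lintegral_congr fun x₁ => ?_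
        rw [← lintegral_const_mul _ (show Measurable fun x₂ => Ψ₁ x₁ * Ψ₂ x₂ * Ψ₃ (x₁ + x₂)
          by fun_prop)]
    _ ≤ cJL * ((min rk₁ (min rk₂ rk₃)) ^ (1/2:ℝ) *
        (eL2 volume Ψ₁ * eL2 volume Ψ₂ * eL2 volume Ψ₃)) := by
        gcongr
        exact tri_min hΨm₁ hΨm₂ hΨm₃ hΨsupp₁ hΨsupp₂ hΨsupp₃
    _ = (min rj₁ (min rj₂ rj₃)) ^ (1/2:ℝ) * ((min rl₁ (min rl₂ rl₃)) ^ (1/2:ℝ) *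
        ((min rk₁ (min rk₂ rk₃)) ^ (1/2:ℝ) *
          (eL2 volume g₁ * eL2 volume g₂ * eL2 volume g₃))) := by
        rw [hΨnorm₁, hΨnorm₂, hΨnorm₃, hcJL]; ring

end ThreeD

lemma ofReal_two_zpow (m : ℤ) : ENNReal.ofReal ((2:ℝ)^m) = (2:ℝ≥0∞)^m := by
  induction m using Int.induction_on with
  | zero => simp
  | succ n ih =>
      rw [zpow_add_one₀ (by norm_num : (2:ℝ) ≠ 0),
        ENNReal.zpow_add (by norm_num) (by norm_num) (n:ℤ) 1, ← ih,
        ENNReal.ofReal_mul (by positivity)]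
      norm_num
  | pred n ih =>
      rw [zpow_sub_one₀ (by norm_num : (2:ℝ) ≠ 0), sub_eq_add_neg,
        ENNReal.zpow_add (by norm_num) (by norm_num) (-n:ℤ) (-1), ← ih,
        ENNReal.ofReal_mul (by positivity), ENNReal.ofReal_inv_of_pos (by norm_num)]
      norm_num
      rw [zpow_neg_one]

lemma eL2_ofReal_eq_eLpNorm {α : Type*} [MeasureSpace α] {f : α → ℝ} (hf : ∀ x, 0 ≤ f x) :
    eL2 volume (fun x => ENNReal.ofReal (f x)) = eLpNorm f 2 volume := by
  rw [eL2, eLpNorm_eq_lintegral_rpow_enorm_toReal two_ne_zero ENNReal.ofNat_ne_top]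
  simp only [ENNReal.toReal_ofNat]
  congr 1
  exact lintegral_congr fun x => by rw [← Real.enorm_eq_ofReal (hf x)]

lemma const_eq (mk ml mj : ℤ) :
    ((2:ℝ≥0∞)^(mj+1)) ^ (1/2:ℝ) * (((2:ℝ≥0∞)^(ml+1)) ^ (1/2:ℝ) * ((2:ℝ≥0∞)^(mk+2)) ^ (1/2:ℝ))
      = ENNReal.ofReal (4 * (2:ℝ) ^ (((mk:ℝ) + (ml:ℝ) + (mj:ℝ)) / 2)) := by
  rw [ENNReal.ofReal_mul (by norm_num), ← ENNReal.ofReal_rpow_of_pos (by norm_num : (0:ℝ) < 2)]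
  rw [← ENNReal.rpow_intCast 2 (mj+1), ← ENNReal.rpow_intCast 2 (ml+1),
    ← ENNReal.rpow_intCast 2 (mk+2), ← ENNReal.rpow_mul, ← ENNReal.rpow_mul,
    ← ENNReal.rpow_mul, ← ENNReal.rpow_add _ _ (by norm_num) (by norm_num),
    ← ENNReal.rpow_add _ _ (by norm_num) (by norm_num)]
  have h4 : ENNReal.ofReal 4 = (2:ℝ≥0∞) ^ (2:ℝ) := by
    rw [show (2:ℝ) = ((2:ℕ):ℝ) by norm_num, ENNReal.rpow_natCast]
    norm_num
  rw [h4, ENNReal.ofReal_ofNat, ← ENNReal.rpow_add _ _ (by norm_num) (by norm_num)]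
  congr 1
  push_cast
  ring

lemma measurableSet_DsetL (k l j : ℤ) : MeasurableSet (DsetL k l j) := by
  have h1 : MeasurableSet {p : ℝ × ℝ × ℝ | (2:ℝ)^(k-1) ≤ |p.1|} :=
    measurableSet_le measurable_const (by fun_prop)
  have h2 : MeasurableSet {p : ℝ × ℝ × ℝ | |p.1| ≤ (2:ℝ)^(k+1)} :=
    measurableSet_le (by fun_prop) measurable_const
  have h3 : MeasurableSet {p : ℝ × ℝ × ℝ | |p.2.1| ≤ (2:ℝ)^l} :=
    measurableSet_le (by fun_prop) measurable_const
  have h4 : MeasurableSet {p : ℝ × ℝ × ℝ | |p.2.2 - omega p.1 p.2.1| ≤ (2:ℝ)^j} := by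
    refine measurableSet_le ?_ measurable_const
    unfold omega
    fun_prop
  have : DsetL k l j = ({p : ℝ × ℝ × ℝ | (2:ℝ)^(k-1) ≤ |p.1|} ∩
      {p : ℝ × ℝ × ℝ | |p.1| ≤ (2:ℝ)^(k+1)}) ∩
      ({p : ℝ × ℝ × ℝ | |p.2.1| ≤ (2:ℝ)^l} ∩
      {p : ℝ × ℝ × ℝ | |p.2.2 - omega p.1 p.2.1| ≤ (2:ℝ)^j}) := by
    ext p
    simp only [DsetL, Itilde, Set.mem_setOf_eq, Set.mem_inter_iff]
  rw [this]
  exact ((h1.inter h2).inter (h3.inter h4))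

lemma exists_rep (k l j : ℤ) (f : ℝ × ℝ × ℝ → ℝ) (hnn : ∀ x, 0 ≤ f x)
    (hm : MemLp f 2 volume) (hs : Function.support f ⊆ DsetL k l j) :
    ∃ f' : ℝ × ℝ × ℝ → ℝ, Measurable f' ∧ (∀ x, 0 ≤ f' x) ∧
      Function.support f' ⊆ DsetL k l j ∧ f =ᵐ[volume] f' := by
  have hD := measurableSet_DsetL k l j
  have ham : AEMeasurable f volume := hm.aestronglyMeasurable.aemeasurable
  refine ⟨(DsetL k l j).indicator (fun x => max (ham.mk f x) 0),
    (ham.measurable_mk.max measurable_const).indicator hD, ?_, ?_, ?_⟩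
  · intro x
    by_cases hx : x ∈ DsetL k l j
    · simp [Set.indicator_of_mem hx, le_max_right]
    · simp [Set.indicator_of_notMem hx]
  · exact Set.support_indicator_subset
  · filter_upwards [ham.ae_eq_mk] with x hx
    by_cases hxD : x ∈ DsetL k l j
    · rw [Set.indicator_of_mem hxD, ← hx, max_eq_left (hnn x)]
    · rw [Set.indicator_of_notMem hxD]
      have hxs : x ∉ Function.support f := fun hsx => hxD (hs hsx)
      simpa [Function.mem_support, not_not] using hxs

end StmtAux

theorem stmt1 :
    ∃ C : ℝ, 0 < C ∧
      ∀ (k₁ k₂ k₃ l₁ l₂ l₃ j₁ j₂ j₃ : ℤ), 0 ≤ j₁ → 0 ≤ j₂ → 0 ≤ j₃ →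
      ∀ f₁ f₂ f₃ : ℝ × ℝ × ℝ → ℝ,
        (∀ x, 0 ≤ f₁ x) → (∀ x, 0 ≤ f₂ x) → (∀ x, 0 ≤ f₃ x) →
        MemLp f₁ 2 volume → MemLp f₂ 2 volume → MemLp f₃ 2 volume →
        Function.support f₁ ⊆ DsetL k₁ l₁ j₁ →
        Function.support f₂ ⊆ DsetL k₂ l₂ j₂ →
        Function.support f₃ ⊆ DsetL k₃ l₃ j₃ →
        (∫⁻ x : ℝ × ℝ × ℝ, ENNReal.ofReal (conv f₁ f₂ x * f₃ x)) ≤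
          ENNReal.ofReal (C * (2 : ℝ) ^
              ((((min k₁ (min k₂ k₃) : ℤ) : ℝ) + ((min l₁ (min l₂ l₃) : ℤ) : ℝ) +
                ((min j₁ (min j₂ j₃) : ℤ) : ℝ)) / 2)) *
            eLpNorm f₁ 2 volume * eLpNorm f₂ 2 volume * eLpNorm f₃ 2 volume := by
  classical
  refine ⟨4, by norm_num, ?_⟩
  intro k₁ k₂ k₃ l₁ l₂ l₃ j₁ j₂ j₃ _ _ _ f₁ f₂ f₃ hnn₁ hnn₂ hnn₃ hL₁ hL₂ hL₃ hs₁ hs₂ hs₃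
  obtain ⟨f₁', hm₁, hn₁, hsp₁, hae₁⟩ := exists_rep k₁ l₁ j₁ f₁ hnn₁ hL₁ hs₁
  obtain ⟨f₂', hm₂, hn₂, hsp₂, hae₂⟩ := exists_rep k₂ l₂ j₂ f₂ hnn₂ hL₂ hs₂
  obtain ⟨f₃', hm₃, hn₃, hsp₃, hae₃⟩ := exists_rep k₃ l₃ j₃ f₃ hnn₃ hL₃ hs₃
  set g₁ : ℝ × ℝ × ℝ → ℝ≥0∞ := fun p => ENNReal.ofReal (f₁' p) with hg₁def
  set g₂ : ℝ × ℝ × ℝ → ℝ≥0∞ := fun p => ENNReal.ofReal (f₂' p) with hg₂def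
  set g₃ : ℝ × ℝ × ℝ → ℝ≥0∞ := fun p => ENNReal.ofReal (f₃' p) with hg₃def
  have hg₁ : Measurable g₁ := ENNReal.measurable_ofReal.comp hm₁
  have hg₂ : Measurable g₂ := ENNReal.measurable_ofReal.comp hm₂
  have hg₃ : Measurable g₃ := ENNReal.measurable_ofReal.comp hm₃
  have hgne : ∀ (f' : ℝ × ℝ × ℝ → ℝ) (p : ℝ × ℝ × ℝ),
      ENNReal.ofReal (f' p) ≠ 0 → f' p ≠ 0 := by
    intro f' p h h0
    rw [h0] at h
    simp at h
  -- LHS rewriting with representatives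
  have hconv_eq : ∀ x, conv f₁ f₂ x = conv f₁' f₂' x := by
    intro x
    rw [conv, conv]
    apply integral_congr_ae
    have h2 : (f₂ ∘ fun y => x - y) =ᵐ[volume] (f₂' ∘ fun y => x - y) :=
      (Measure.measurePreserving_sub_left volume x).quasiMeasurePreserving.ae_eq_comp hae₂
    filter_upwards [hae₁, h2] with y hy1 hy2
    simp only [Function.comp_apply] at hy2
    rw [hy1, hy2]
  have hLHSeq : (∫⁻ x, ENNReal.ofReal (conv f₁ f₂ x * f₃ x))
      = ∫⁻ x, ENNReal.ofReal (conv f₁' f₂' x * f₃' x) := by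
    apply lintegral_congr_ae
    filter_upwards [hae₃] with x hx
    rw [hconv_eq x, hx]
  have hcnn : ∀ x, 0 ≤ conv f₁' f₂' x := fun x =>
    integral_nonneg fun y => mul_nonneg (hn₁ y) (hn₂ _)
  have hbound1 : ∀ x, ENNReal.ofReal (conv f₁' f₂' x) ≤ ∫⁻ y, g₁ y * g₂ (x - y) := by
    intro x
    rw [conv]
    by_cases hint : Integrable (fun y => f₁' y * f₂' (x - y)) volume
    · rw [ofReal_integral_eq_lintegral_ofReal hint
        (Filter.Eventually.of_forall fun y => mul_nonneg (hn₁ y) (hn₂ _))]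
      exact le_of_eq (lintegral_congr fun y => ENNReal.ofReal_mul (hn₁ y))
    · rw [integral_undef hint]
      simp
  have hswap : (∫⁻ x, ∫⁻ y, g₁ y * g₂ (x - y) * g₃ x)
      = ∫⁻ y, ∫⁻ x, g₁ y * g₂ (x - y) * g₃ x :=
    lintegral_lintegral_swap (Measurable.aemeasurable (show Measurable fun q :
      (ℝ × ℝ × ℝ) × (ℝ × ℝ × ℝ) => g₁ q.2 * g₂ (q.1 - q.2) * g₃ q.1 by fun_prop))
  have hsub : ∀ y, (∫⁻ x, g₁ y * g₂ (x - y) * g₃ x) = ∫⁻ z, g₁ y * g₂ z * g₃ (y + z) := by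
    intro y
    rw [← lintegral_add_left_eq_self (f := fun x => g₁ y * g₂ (x - y) * g₃ x) y]
    exact lintegral_congr fun z => by rw [add_sub_cancel_left]
  -- support data for threeD
  have habs : ∀ (k l j : ℤ) (f' : ℝ × ℝ × ℝ → ℝ) (hsp : Function.support f' ⊆ DsetL k l j)
      (p : ℝ × ℝ × ℝ), f' p ≠ 0 → p ∈ DsetL k l j := by
    intro k l j f' hsp p hne
    exact hsp (Function.mem_support.mpr hne)
  have hvIcc : ∀ a r : ℝ, volume (Set.Icc (a - r) (a + r)) = ENNReal.ofReal (2 * r) := by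
    intro a r
    rw [Real.volume_Icc]
    congr 1
    ring
  have hvK : ∀ m : ℤ, volume (Set.Icc (-(2:ℝ)^(m+1)) ((2:ℝ)^(m+1))) ≤ (2:ℝ≥0∞)^(m+2) := by
    intro m
    rw [Real.volume_Icc, ← ofReal_two_zpow]
    apply ENNReal.ofReal_le_ofReal
    rw [show m + 2 = (m+1) + 1 by ring, zpow_add_one₀ (by norm_num : (2:ℝ) ≠ 0) (m+1)]
    nlinarith [zpow_pos (by norm_num : (0:ℝ) < 2) (m+1)]
  have hvS : ∀ m : ℤ, volume (Set.Icc (-(2:ℝ)^m) ((2:ℝ)^m)) ≤ (2:ℝ≥0∞)^(m+1) := by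
    intro m
    rw [Real.volume_Icc, ← ofReal_two_zpow]
    apply ENNReal.ofReal_le_ofReal
    rw [zpow_add_one₀ (by norm_num : (2:ℝ) ≠ 0) m]
    nlinarith [zpow_pos (by norm_num : (0:ℝ) < 2) m]
  have hjb : ∀ (k l j : ℤ) (f' : ℝ × ℝ × ℝ → ℝ)
      (hsp : Function.support f' ⊆ DsetL k l j) (x y : ℝ),
      volume {z : ℝ | ENNReal.ofReal (f' (x, (y, z))) ≠ 0} ≤ (2:ℝ≥0∞)^(j+1) := by
    intro k l j f' hsp x y
    have hss : {z : ℝ | ENNReal.ofReal (f' (x, (y, z))) ≠ 0} ⊆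
        Set.Icc (omega x y - (2:ℝ)^j) (omega x y + (2:ℝ)^j) := by
      intro z hz
      have hfz : f' (x, (y, z)) ≠ 0 := hgne f' _ hz
      have hp := habs k l j f' hsp _ hfz
      have := hp.2.2
      simp only [Set.mem_Icc]
      constructor <;> [linarith [abs_le.mp this]; linarith [(abs_le.mp this).2]]
    calc volume {z : ℝ | ENNReal.ofReal (f' (x, (y, z))) ≠ 0}
        ≤ volume (Set.Icc (omega x y - (2:ℝ)^j) (omega x y + (2:ℝ)^j)) := measure_mono hss
      _ = ENNReal.ofReal (2 * (2:ℝ)^j) := hvIcc _ _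
      _ ≤ (2:ℝ≥0∞)^(j+1) := by
          rw [← ofReal_two_zpow]
          apply ENNReal.ofReal_le_ofReal
          rw [zpow_add_one₀ (by norm_num : (2:ℝ) ≠ 0) j]
          nlinarith [zpow_pos (by norm_num : (0:ℝ) < 2) j]
  -- apply the trilinear estimate
  have hmain : (∫⁻ y, ∫⁻ z, g₁ y * g₂ z * g₃ (y + z)) ≤
      (min ((2:ℝ≥0∞)^(j₁+1)) (min ((2:ℝ≥0∞)^(j₂+1)) ((2:ℝ≥0∞)^(j₃+1)))) ^ (1/2:ℝ) *
        ((min ((2:ℝ≥0∞)^(l₁+1)) (min ((2:ℝ≥0∞)^(l₂+1)) ((2:ℝ≥0∞)^(l₃+1)))) ^ (1/2:ℝ) *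
          ((min ((2:ℝ≥0∞)^(k₁+2)) (min ((2:ℝ≥0∞)^(k₂+2)) ((2:ℝ≥0∞)^(k₃+2)))) ^ (1/2:ℝ) *
            (eL2 volume g₁ * eL2 volume g₂ * eL2 volume g₃))) := by
    apply threeD hg₁ hg₂ hg₃
      (measurableSet_Icc) (measurableSet_Icc) (measurableSet_Icc)
      (measurableSet_Icc) (measurableSet_Icc) (measurableSet_Icc)
    · intro p hp
      have h := (habs k₁ l₁ j₁ f₁' hsp₁ p (hgne f₁' p hp)).1.2
      exact Set.mem_Icc.mpr (abs_le.mp h)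
    · intro p hp
      have h := (habs k₂ l₂ j₂ f₂' hsp₂ p (hgne f₂' p hp)).1.2
      exact Set.mem_Icc.mpr (abs_le.mp h)
    · intro p hp
      have h := (habs k₃ l₃ j₃ f₃' hsp₃ p (hgne f₃' p hp)).1.2
      exact Set.mem_Icc.mpr (abs_le.mp h)
    · exact hvK k₁
    · exact hvK k₂
    · exact hvK k₃
    · intro p hp
      have h := (habs k₁ l₁ j₁ f₁' hsp₁ p (hgne f₁' p hp)).2.1
      exact Set.mem_Icc.mpr (abs_le.mp h)
    · intro p hp
      have h := (habs k₂ l₂ j₂ f₂' hsp₂ p (hgne f₂' p hp)).2.1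
      exact Set.mem_Icc.mpr (abs_le.mp h)
    · intro p hp
      have h := (habs k₃ l₃ j₃ f₃' hsp₃ p (hgne f₃' p hp)).2.1
      exact Set.mem_Icc.mpr (abs_le.mp h)
    · exact hvS l₁
    · exact hvS l₂
    · exact hvS l₃
    · exact hjb k₁ l₁ j₁ f₁' hsp₁
    · exact hjb k₂ l₂ j₂ f₂' hsp₂
    · exact hjb k₃ l₃ j₃ f₃' hsp₃
  -- identify the constant
  have hmono : Monotone fun m : ℤ => (2:ℝ≥0∞)^m := fun a b h =>
    ENNReal.zpow_le_of_le one_le_two h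
  have map_min2 : ∀ a b : ℤ, min ((2:ℝ≥0∞)^a) ((2:ℝ≥0∞)^b) = (2:ℝ≥0∞)^(min a b) :=
    fun a b => (hmono.map_min).symm
  have hminj : min ((2:ℝ≥0∞)^(j₁+1)) (min ((2:ℝ≥0∞)^(j₂+1)) ((2:ℝ≥0∞)^(j₃+1)))
      = (2:ℝ≥0∞)^(min j₁ (min j₂ j₃) + 1) := by
    rw [map_min2, map_min2]
    congr 1
    omega
  have hminl : min ((2:ℝ≥0∞)^(l₁+1)) (min ((2:ℝ≥0∞)^(l₂+1)) ((2:ℝ≥0∞)^(l₃+1)))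
      = (2:ℝ≥0∞)^(min l₁ (min l₂ l₃) + 1) := by
    rw [map_min2, map_min2]
    congr 1
    omega
  have hmink : min ((2:ℝ≥0∞)^(k₁+2)) (min ((2:ℝ≥0∞)^(k₂+2)) ((2:ℝ≥0∞)^(k₃+2)))
      = (2:ℝ≥0∞)^(min k₁ (min k₂ k₃) + 2) := by
    rw [map_min2, map_min2]
    congr 1
    omega
  have hN₁ : eL2 volume g₁ = eLpNorm f₁ 2 volume := by
    rw [hg₁def, eL2_ofReal_eq_eLpNorm hn₁, eLpNorm_congr_ae hae₁.symm]
  have hN₂ : eL2 volume g₂ = eLpNorm f₂ 2 volume := by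
    rw [hg₂def, eL2_ofReal_eq_eLpNorm hn₂, eLpNorm_congr_ae hae₂.symm]
  have hN₃ : eL2 volume g₃ = eLpNorm f₃ 2 volume := by
    rw [hg₃def, eL2_ofReal_eq_eLpNorm hn₃, eLpNorm_congr_ae hae₃.symm]
  calc (∫⁻ x, ENNReal.ofReal (conv f₁ f₂ x * f₃ x))
      = ∫⁻ x, ENNReal.ofReal (conv f₁' f₂' x * f₃' x) := hLHSeq
    _ ≤ ∫⁻ x, (∫⁻ y, g₁ y * g₂ (x - y)) * g₃ x := by
        refine lintegral_mono fun x => ?_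
        show ENNReal.ofReal (conv f₁' f₂' x * f₃' x) ≤ (∫⁻ y, g₁ y * g₂ (x - y)) * g₃ x
        rw [ENNReal.ofReal_mul (hcnn x)]
        exact mul_le_mul_left (hbound1 x) _
    _ = ∫⁻ x, ∫⁻ y, g₁ y * g₂ (x - y) * g₃ x :=
        lintegral_congr fun x => (lintegral_mul_const _ (by fun_prop)).symm
    _ = ∫⁻ y, ∫⁻ x, g₁ y * g₂ (x - y) * g₃ x := hswap
    _ = ∫⁻ y, ∫⁻ z, g₁ y * g₂ z * g₃ (y + z) := lintegral_congr fun y => hsub y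
    _ ≤ (min ((2:ℝ≥0∞)^(j₁+1)) (min ((2:ℝ≥0∞)^(j₂+1)) ((2:ℝ≥0∞)^(j₃+1)))) ^ (1/2:ℝ) *
        ((min ((2:ℝ≥0∞)^(l₁+1)) (min ((2:ℝ≥0∞)^(l₂+1)) ((2:ℝ≥0∞)^(l₃+1)))) ^ (1/2:ℝ) *
          ((min ((2:ℝ≥0∞)^(k₁+2)) (min ((2:ℝ≥0∞)^(k₂+2)) ((2:ℝ≥0∞)^(k₃+2)))) ^ (1/2:ℝ) *
            (eL2 volume g₁ * eL2 volume g₂ * eL2 volume g₃))) := hmain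
    _ = ENNReal.ofReal (4 * (2 : ℝ) ^
          ((((min k₁ (min k₂ k₃) : ℤ) : ℝ) + ((min l₁ (min l₂ l₃) : ℤ) : ℝ) +
            ((min j₁ (min j₂ j₃) : ℤ) : ℝ)) / 2)) *
        eLpNorm f₁ 2 volume * eLpNorm f₂ 2 volume * eLpNorm f₃ 2 volume := by
        rw [hminj, hminl, hmink, hN₁, hN₂, hN₃,
          ← const_eq (min k₁ (min k₂ k₃)) (min l₁ (min l₂ l₃)) (min j₁ (min j₂ j₃))]
        ring
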